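/- Let τ > 0 and let U : [0,τ] → ℝ^m be a C² function satisfying the linear second-order differential equation U''(t) = A(t) U(t) + B(t) for continuous A : [0,τ] → ℝ^{m×m} and B : [0,τ] → ℝ^m, with boundary conditions U(0) = U(τ) = 0. If ‖A(t)‖ τ² ≤ 1 for all t ∈ [0,τ], then ‖U'(t)‖ ≤ 3 τ · sup_{s∈[0,τ]} ‖B(s)‖ for every t ∈ [0,τ]. -/

import Mathlib

theorem aux_arith (τ M K b t0 : ℝ) (hτ : 0 < τ) (hKnn : 0 ≤ K) (h0 : 0 ≤ t0) (h1 : t0 ≤ τ)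
    (hKτ : K * τ = M + b * τ)
    (hkey : τ * M ≤ K * (t0 ^ 2 / 2) + K * ((τ - t0) ^ 2 / 2)) : M ≤ τ * b := by
  have h7 : τ * M ≤ K * τ ^ 2 / 2 := by
    nlinarith [mul_nonneg (mul_nonneg hKnn h0) (by linarith : (0:ℝ) ≤ τ - t0)]
  have h8 : K * τ ^ 2 = (M + b * τ) * τ := by rw [pow_two, ← mul_assoc, hKτ]
  nlinarith [h7, h8, hτ]


/-- Let `U : [0,τ] → ℝ^m` be C² with `U(0) = U(τ) = 0`, satisfying
`U'' = A U + B` on `[0,τ]` for continuous `A`, `B`. If `‖A(t)‖ τ² ≤ 1` on `[0,τ]`,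
then `‖U'(t)‖ ≤ 3 τ sup ‖B‖` on `[0,τ]` (the sup being encoded by any upper bound
`b` of `‖B‖` on `[0,τ]`). -/
theorem deriv_bound_of_second_order_ODE (m : ℕ) (τ : ℝ) (hτ : 0 < τ)
    (U U' U'' : ℝ → EuclideanSpace ℝ (Fin m))
    (A : ℝ → EuclideanSpace ℝ (Fin m) →L[ℝ] EuclideanSpace ℝ (Fin m))
    (B : ℝ → EuclideanSpace ℝ (Fin m))
    (hA : ContinuousOn A (Set.Icc 0 τ)) (hB : ContinuousOn B (Set.Icc 0 τ))
    (hU' : ∀ t ∈ Set.Icc 0 τ, HasDerivWithinAt U (U' t) (Set.Icc 0 τ) t)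
    (hU'' : ∀ t ∈ Set.Icc 0 τ, HasDerivWithinAt U' (U'' t) (Set.Icc 0 τ) t)
    (hU''cont : ContinuousOn U'' (Set.Icc 0 τ))
    (hODE : ∀ t ∈ Set.Icc 0 τ, U'' t = A t (U t) + B t)
    (hbdry0 : U 0 = 0) (hbdryτ : U τ = 0)
    (hAnorm : ∀ t ∈ Set.Icc 0 τ, ‖A t‖ * τ ^ 2 ≤ 1)
    (b : ℝ) (hb : ∀ s ∈ Set.Icc 0 τ, ‖B s‖ ≤ b)
    (t : ℝ) (ht : t ∈ Set.Icc 0 τ) :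
    ‖U' t‖ ≤ 3 * τ * b := by
  have h0mem : (0:ℝ) ∈ Set.Icc 0 τ := ⟨le_refl 0, hτ.le⟩
  have hb0 : 0 ≤ b := le_trans (norm_nonneg _) (hb 0 h0mem)
  -- continuity of U and U'
  have hUcont : ContinuousOn U (Set.Icc 0 τ) := fun x hx => (hU' x hx).continuousWithinAt
  have hU'cont : ContinuousOn U' (Set.Icc 0 τ) := fun x hx => (hU'' x hx).continuousWithinAt
  -- max point of ‖U'‖
  obtain ⟨t₀, ht₀, ht₀max⟩ := isCompact_Icc.exists_isMaxOn (Set.nonempty_Icc.2 hτ.le)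
    (hU'cont.norm)
  set M : ℝ := ‖U' t₀‖ with hM
  have hMnn : 0 ≤ M := norm_nonneg _
  have hmax : ∀ s ∈ Set.Icc 0 τ, ‖U' s‖ ≤ M := fun s hs => ht₀max hs
  -- ‖U s‖ ≤ M * τ
  have hUbound : ∀ s ∈ Set.Icc 0 τ, ‖U s‖ ≤ M * τ := by
    intro s hs
    have := Convex.norm_image_sub_le_of_norm_hasDerivWithin_le hU' hmax (convex_Icc 0 τ)
      h0mem hs
    rw [hbdry0, sub_zero] at this
    calc ‖U s‖ ≤ M * ‖s - 0‖ := this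
      _ ≤ M * τ := by
          rw [sub_zero, Real.norm_eq_abs, abs_of_nonneg hs.1]
          exact mul_le_mul_of_nonneg_left hs.2 hMnn
  set K : ℝ := M / τ + b with hK
  have hKτ : K * τ = M + b * τ := by rw [hK, add_mul, div_mul_cancel₀ M hτ.ne']
  have hKnn : 0 ≤ K := by positivity
  -- ‖U'' s‖ ≤ K
  have hU''bound : ∀ s ∈ Set.Icc 0 τ, ‖U'' s‖ ≤ K := by
    intro s hs
    rw [hODE s hs]
    have h1 : ‖A s (U s) + B s‖ ≤ ‖A s‖ * ‖U s‖ + b :=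
      le_trans (norm_add_le _ _) (add_le_add ((A s).le_opNorm (U s)) (hb s hs))
    have h2 : ‖A s‖ * τ ^ 2 ≤ 1 := hAnorm s hs
    have h3 : ‖U s‖ ≤ M * τ := hUbound s hs
    have h4 : (0:ℝ) ≤ ‖A s‖ := norm_nonneg _
    have h5 : ‖A s‖ * ‖U s‖ * τ ≤ M := by nlinarith [norm_nonneg (U s)]
    have h6 : ‖A s‖ * ‖U s‖ ≤ M / τ := by
      rw [le_div_iff₀ hτ]; exact h5
    calc ‖A s (U s) + B s‖ ≤ M / τ + b := by linarith
      _ = K := hK.symm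
  -- Lipschitz bound on U'
  have hU'lip : ∀ x ∈ Set.Icc 0 τ, ∀ y ∈ Set.Icc 0 τ, ‖U' y - U' x‖ ≤ K * ‖y - x‖ :=
    fun x hx y hy =>
      Convex.norm_image_sub_le_of_norm_hasDerivWithin_le hU'' hU''bound (convex_Icc 0 τ) hx hy
  -- ∫₀^τ U' = 0
  have hU'int : ∀ x ∈ Set.Icc 0 τ, ∀ y ∈ Set.Icc 0 τ, IntervalIntegrable U' MeasureTheory.volume x y := by
    intro x hx y hy
    apply ContinuousOn.intervalIntegrable
    exact hU'cont.mono (Set.uIcc_subset_Icc hx hy)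
  have hFTC : ∫ s in (0:ℝ)..τ, U' s = 0 := by
    rw [intervalIntegral.integral_eq_sub_of_hasDeriv_right_of_le hτ.le hUcont
      (fun x hx => ((hU' x (Set.Ioo_subset_Icc_self hx)).hasDerivAt
        (Icc_mem_nhds hx.1 hx.2)).hasDerivWithinAt) (hU'int 0 h0mem τ ⟨hτ.le, le_refl τ⟩)]
    rw [hbdry0, hbdryτ, sub_zero]
  -- τ • U' t₀ = ∫₀^τ (U' t₀ - U' s) ds
  have hdiff_int : ∀ x ∈ Set.Icc 0 τ, ∀ y ∈ Set.Icc 0 τ,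
      IntervalIntegrable (fun s => U' t₀ - U' s) MeasureTheory.volume x y := by
    intro x hx y hy
    exact (intervalIntegrable_const).sub (hU'int x hx y hy)
  have hnorm_int : ∀ x ∈ Set.Icc 0 τ, ∀ y ∈ Set.Icc 0 τ,
      IntervalIntegrable (fun s => ‖U' t₀ - U' s‖) MeasureTheory.volume x y := by
    intro x hx y hy
    apply ContinuousOn.intervalIntegrable
    exact ((continuousOn_const.sub hU'cont).mono (Set.uIcc_subset_Icc hx hy)).norm
  have hrepr : τ • U' t₀ = ∫ s in (0:ℝ)..τ, (U' t₀ - U' s) := by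
    rw [intervalIntegral.integral_sub intervalIntegrable_const (hU'int 0 h0mem τ ⟨hτ.le, le_refl τ⟩),
      hFTC, sub_zero, intervalIntegral.integral_const, sub_zero]
  have htmem : t₀ ∈ Set.Icc 0 τ := ht₀
  have hτmem : τ ∈ Set.Icc 0 τ := ⟨hτ.le, le_refl τ⟩
  -- first piece: ‖∫₀^{t₀}‖ ≤ K * t₀²/2
  have hpiece1 : ‖∫ s in (0:ℝ)..t₀, (U' t₀ - U' s)‖ ≤ K * (t₀ ^ 2 / 2) := by
    calc ‖∫ s in (0:ℝ)..t₀, (U' t₀ - U' s)‖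
        ≤ ∫ s in (0:ℝ)..t₀, ‖U' t₀ - U' s‖ :=
          intervalIntegral.norm_integral_le_integral_norm htmem.1
      _ ≤ ∫ s in (0:ℝ)..t₀, K * (t₀ - s) := by
          apply intervalIntegral.integral_mono_on htmem.1 (hnorm_int 0 h0mem t₀ htmem)
          · apply ContinuousOn.intervalIntegrable
            exact (continuousOn_const.mul (continuousOn_const.sub continuousOn_id))
          · intro x hx
            have hx' : x ∈ Set.Icc 0 τ := ⟨hx.1, le_trans hx.2 htmem.2⟩
            have := hU'lip x hx' t₀ htmem
            rwa [Real.norm_eq_abs, abs_of_nonneg (by linarith [hx.2])] at this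
      _ = K * (t₀ ^ 2 / 2) := by
          rw [intervalIntegral.integral_const_mul]
          congr 1
          rw [intervalIntegral.integral_sub intervalIntegrable_const
            intervalIntegral.intervalIntegrable_id,
            intervalIntegral.integral_const, integral_id]
          simp; ring
  -- second piece: ‖∫_{t₀}^τ‖ ≤ K * (τ - t₀)²/2
  have hpiece2 : ‖∫ s in t₀..τ, (U' t₀ - U' s)‖ ≤ K * ((τ - t₀) ^ 2 / 2) := by
    calc ‖∫ s in t₀..τ, (U' t₀ - U' s)‖
        ≤ ∫ s in t₀..τ, ‖U' t₀ - U' s‖ :=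
          intervalIntegral.norm_integral_le_integral_norm htmem.2
      _ ≤ ∫ s in t₀..τ, K * (s - t₀) := by
          apply intervalIntegral.integral_mono_on htmem.2 (hnorm_int t₀ htmem τ hτmem)
          · apply ContinuousOn.intervalIntegrable
            exact (continuousOn_const.mul (continuousOn_id.sub continuousOn_const))
          · intro x hx
            have hx' : x ∈ Set.Icc 0 τ := ⟨le_trans htmem.1 hx.1, hx.2⟩
            have := hU'lip x hx' t₀ htmem
            rw [Real.norm_eq_abs, abs_of_nonpos (by linarith [hx.1])] at this
            calc ‖U' t₀ - U' x‖ ≤ K * -(t₀ - x) := this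
              _ = K * (x - t₀) := by ring
      _ = K * ((τ - t₀) ^ 2 / 2) := by
          rw [intervalIntegral.integral_const_mul]
          congr 1
          rw [intervalIntegral.integral_sub intervalIntegral.intervalIntegrable_id
            intervalIntegrable_const,
            intervalIntegral.integral_const, integral_id]
          simp; ring
  -- combine
  have hsplit : (∫ s in (0:ℝ)..t₀, (U' t₀ - U' s)) + ∫ s in t₀..τ, (U' t₀ - U' s)
      = ∫ s in (0:ℝ)..τ, (U' t₀ - U' s) :=
    intervalIntegral.integral_add_adjacent_intervals (hdiff_int 0 h0mem t₀ htmem)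
      (hdiff_int t₀ htmem τ hτmem)
  have hkey : τ * M ≤ K * (t₀ ^ 2 / 2) + K * ((τ - t₀) ^ 2 / 2) := by
    calc τ * M = ‖τ • U' t₀‖ := by
          rw [norm_smul, Real.norm_eq_abs, abs_of_nonneg hτ.le]
      _ = ‖(∫ s in (0:ℝ)..t₀, (U' t₀ - U' s)) + ∫ s in t₀..τ, (U' t₀ - U' s)‖ := by
          rw [hsplit, hrepr]
      _ ≤ _ := le_trans (norm_add_le _ _) (add_le_add hpiece1 hpiece2)
  -- conclude M ≤ τ * b
  have hMb : M ≤ τ * b := by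
    have ht₀1 : 0 ≤ t₀ := htmem.1
    have ht₀2 : t₀ ≤ τ := htmem.2
    exact aux_arith τ M K b t₀ hτ hKnn ht₀1 ht₀2 hKτ hkey
  calc ‖U' t‖ ≤ M := hmax t ht
    _ ≤ τ * b := hMb
    _ ≤ 3 * τ * b := by nlinarith
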